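/- Let S = k[x₀,x₁,x₂,…,x_n], let I ⊆ S be a squarefree monomial ideal, and let J ⊆ S be its Alexander dual. Let S₁ = k[x,x₂,…,x_n] and π : S → S₁ the ring map with x₀,x₁ ↦ x and x_i ↦ x_i for i ≥ 2, and let I₁ ⊆ S₁ be the ideal generated by π(I). If I₁ is a squarefree monomial ideal, then x₁ − x₀ is a regular element (nonzerodivisor) on S/J. -/

import Mathlib

open MvPolynomial

/-- Evaluate `mapDomain` at a point as a sum over the support. -/
lemma aux_mapDomain_apply_eq {α β : Type*} [DecidableEq β] (g : α → β) (u : α →₀ ℕ) (w : β) :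
    Finsupp.mapDomain g u w = ∑ v ∈ u.support, if g v = w then u v else 0 := by
  rw [Finsupp.mapDomain, Finsupp.sum_apply, Finsupp.sum]
  exact Finset.sum_congr rfl fun v _ => Finsupp.single_apply

/-- The chain argument: if every monomial of `(X i - X j) * f` satisfies an (arbitrary)
property `P`, then for every monomial `m` of `f` there is a monomial `u` satisfying `P`
which agrees with `m` away from `i, j`, has `i` in its support, and whose `j`-coordinate
is nonzero only if that of `m` is. -/
lemma aux_chain {σ K : Type*} [CommRing K] [DecidableEq σ] (i j : σ) (hij : i ≠ j)
    (f : MvPolynomial σ K) (P : (σ →₀ ℕ) → Prop)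
    (hP : ∀ u ∈ ((X i - X j) * f).support, P u)
    (m : σ →₀ ℕ) (hm : m ∈ f.support) :
    ∃ u : σ →₀ ℕ, P u ∧ u i ≠ 0 ∧ (∀ v, v ≠ i → v ≠ j → u v = m v) ∧
      (u j ≠ 0 → m j ≠ 0) := by
  classical
  set B : ℕ → (σ →₀ ℕ) := fun t => m + t • Finsupp.single i 1 - t • Finsupp.single j 1 with hB
  have hBapp : ∀ t v, B t v = (m v + t * (if i = v then 1 else 0)) -
      t * (if j = v then 1 else 0) := by
    intro t v
    simp only [hB, Finsupp.tsub_apply, Finsupp.add_apply, Finsupp.smul_apply,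
      Finsupp.single_apply, smul_eq_mul]
  set Q : ℕ → Prop := fun t => f.coeff (B t) ≠ 0 with hQ
  have hQ0 : Q 0 := by
    have : B 0 = m := by ext v; rw [hBapp]; simp
    simpa [hQ, this] using MvPolynomial.mem_support_iff.mp hm
  set t0 := Nat.findGreatest Q (m j) with ht0
  have ht0le : t0 ≤ m j := Nat.findGreatest_le _
  have hQt0 : Q t0 := Nat.findGreatest_spec (Nat.zero_le _) hQ0
  set u : σ →₀ ℕ := m + (t0 + 1) • Finsupp.single i 1 - t0 • Finsupp.single j 1 with hu
  have huapp : ∀ v, u v = (m v + (t0 + 1) * (if i = v then 1 else 0)) -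
      t0 * (if j = v then 1 else 0) := by
    intro v
    simp only [hu, Finsupp.tsub_apply, Finsupp.add_apply, Finsupp.smul_apply,
      Finsupp.single_apply, smul_eq_mul]
  have hui : u i = m i + (t0 + 1) := by
    rw [huapp, if_pos rfl, if_neg (fun h => hij h.symm)]; omega
  have huj : u j = m j - t0 := by
    rw [huapp, if_neg hij, if_pos rfl]; omega
  have huv : ∀ v, v ≠ i → v ≠ j → u v = m v := by
    intro v hvi hvj
    rw [huapp, if_neg (fun h => hvi h.symm), if_neg (fun h => hvj h.symm)]; omega
  have hiu : i ∈ u.support := by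
    rw [Finsupp.mem_support_iff, hui]; omega
  have hsubi : u - Finsupp.single i 1 = B t0 := by
    ext v
    rw [Finsupp.tsub_apply, huapp, hBapp, Finsupp.single_apply]
    split_ifs <;> omega
  have hcoeffXi : MvPolynomial.coeff u (X i * f) = f.coeff (B t0) := by
    rw [coeff_X_mul', if_pos hiu, hsubi]
  have hcoeffXj : MvPolynomial.coeff u (X j * f) = 0 := by
    rw [coeff_X_mul']
    by_cases h : t0 < m j
    · have hju : j ∈ u.support := by rw [Finsupp.mem_support_iff, huj]; omega
      rw [if_pos hju]
      have hsubj : u - Finsupp.single j 1 = B (t0 + 1) := by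
        ext v
        rw [Finsupp.tsub_apply, huapp, hBapp, Finsupp.single_apply]
        split_ifs <;> omega
      rw [hsubj]
      have := Nat.findGreatest_is_greatest (P := Q) (n := m j) (k := t0 + 1) (by omega) (by omega)
      simpa [hQ] using this
    · rw [if_neg]
      rw [Finsupp.mem_support_iff, huj]
      omega
  have humem : u ∈ ((X i - X j) * f).support := by
    rw [MvPolynomial.mem_support_iff, sub_mul, coeff_sub, hcoeffXi, hcoeffXj, sub_zero]
    exact hQt0
  refine ⟨u, hP u humem, by rw [hui]; omega, huv, by rw [huj]; omega⟩

/-- If the image `I₁` of a squarefree monomial ideal `I` under `x₀,x₁ ↦ x` is a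
squarefree monomial ideal, then `x₁ - x₀` is a regular element on `S/J` where `J` is the
Alexander dual of `I`. -/
theorem variable_difference_regular_on_dual
    (k : Type*) [Field k] (n : ℕ) (hn : 1 ≤ n)
    (I : Ideal (MvPolynomial (Fin (n + 1)) k))
    (hIsqfree : ∃ G : Set (Fin (n + 1) →₀ ℕ), (∀ d ∈ G, ∀ v, d v ≤ 1) ∧
      I = Ideal.span ((fun d => monomial d (1 : k)) '' G))
    (J : Ideal (MvPolynomial (Fin (n + 1)) k))
    (hJ : J = Ideal.span { m : MvPolynomial (Fin (n + 1)) k |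
      ∃ d : Fin (n + 1) →₀ ℕ,
        (∀ e : Fin (n + 1) →₀ ℕ, monomial e (1 : k) ∈ I →
          ∃ v, v ∈ d.support ∧ v ∈ e.support) ∧
        m = monomial d (1 : k) })
    (g : Fin (n + 1) → Fin n)
    (hg : ∀ i : Fin (n + 1), (g i : ℕ) = if (i : ℕ) ≤ 1 then 0 else (i : ℕ) - 1)
    (hI₁sqfree : ∃ G₁ : Set (Fin n →₀ ℕ), (∀ d ∈ G₁, ∀ v, d v ≤ 1) ∧
      Ideal.map (rename g) I = Ideal.span ((fun d => monomial d (1 : k)) '' G₁)) :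
    ∀ f : MvPolynomial (Fin (n + 1)) k, (X 1 - X 0) * f ∈ J → f ∈ J := by
  classical
  obtain ⟨G, hGsq, hGI⟩ := hIsqfree
  obtain ⟨G₁, hG₁sq, hG₁⟩ := hI₁sqfree
  set P : (Fin (n + 1) →₀ ℕ) → Prop := fun d =>
    ∀ e : Fin (n + 1) →₀ ℕ, monomial e (1 : k) ∈ I →
      ∃ v, v ∈ d.support ∧ v ∈ e.support with hP
  -- membership in J
  have hJset : { m : MvPolynomial (Fin (n + 1)) k |
      ∃ d : Fin (n + 1) →₀ ℕ,
        (∀ e : Fin (n + 1) →₀ ℕ, monomial e (1 : k) ∈ I →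
          ∃ v, v ∈ d.support ∧ v ∈ e.support) ∧
        m = monomial d (1 : k) } = (fun d => monomial d (1 : k)) '' { d | P d } := by
    ext x
    constructor
    · rintro ⟨d, hd, rfl⟩; exact ⟨d, hd, rfl⟩
    · rintro ⟨d, hd, rfl⟩; exact ⟨d, hd, rfl⟩
  have hJ' : J = Ideal.span ((fun d => monomial d (1 : k)) '' { d | P d }) :=
    hJ.trans (congrArg Ideal.span hJset)
  have hJmem : ∀ q : MvPolynomial (Fin (n + 1)) k, q ∈ J ↔ ∀ u ∈ q.support, P u := by
    intro q
    rw [hJ', mem_ideal_span_monomial_image]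
    constructor
    · intro h u hu
      obtain ⟨d, hdP, hdle⟩ := h u hu
      intro e he
      obtain ⟨v, hvd, hve⟩ := hdP e he
      refine ⟨v, ?_, hve⟩
      rw [Finsupp.mem_support_iff] at hvd ⊢
      have := hdle v
      omega
    · intro h u hu
      exact ⟨u, h u hu, le_refl u⟩
  -- facts about g
  have hval1 : ((1 : Fin (n + 1)) : ℕ) = 1 := by
    rw [Fin.val_one']; exact Nat.mod_eq_of_lt (by omega)
  have hne01 : (1 : Fin (n + 1)) ≠ 0 := by
    rw [Fin.ne_iff_vne, hval1]; simp
  have hgval : ∀ v : Fin (n + 1), (g v : ℕ) = if (v : ℕ) ≤ 1 then 0 else (v : ℕ) - 1 := hg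
  have hfib0 : ∀ v : Fin (n + 1), g v = g 0 ↔ (v : ℕ) ≤ 1 := by
    intro v
    rw [Fin.ext_iff, hgval, hgval, if_pos (by simp : ((0 : Fin (n + 1)) : ℕ) ≤ 1)]
    split_ifs <;> omega
  have hfib2 : ∀ v w : Fin (n + 1), 2 ≤ (v : ℕ) → g w = g v → w = v := by
    intro v w hv h
    rw [Fin.ext_iff, hgval, hgval] at h
    rw [Fin.ext_iff]
    have hwn : (w : ℕ) < n + 1 := w.isLt
    have hvn : (v : ℕ) < n + 1 := v.isLt
    split_ifs at h <;> omega
  have hmd2 : ∀ (u : Fin (n + 1) →₀ ℕ) (v : Fin (n + 1)), 2 ≤ (v : ℕ) →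
      Finsupp.mapDomain g u (g v) = u v := by
    intro u v hv
    rw [aux_mapDomain_apply_eq]
    rw [Finset.sum_eq_single v]
    · simp
    · intro b _ hbv
      exact if_neg fun h => hbv (hfib2 v b hv h)
    · intro hv'
      rw [Finsupp.notMem_support_iff.mp hv']
      simp
  have hcase01 : ∀ v : Fin (n + 1), (v : ℕ) ≤ 1 ↔ (v = 0 ∨ v = 1) := by
    intro v
    rw [Fin.ext_iff, Fin.ext_iff, hval1]
    simp only [Fin.val_zero]
    omega
  have hmd0 : ∀ u : Fin (n + 1) →₀ ℕ, Finsupp.mapDomain g u (g 0) = u 0 + u 1 := by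
    intro u
    rw [aux_mapDomain_apply_eq]
    have hstep : ∀ v ∈ u.support, (if g v = g 0 then u v else 0) =
        (if v = 0 then u v else 0) + (if v = 1 then u v else 0) := by
      intro v _
      by_cases h0 : v = 0
      · subst h0
        rw [if_pos ((hfib0 0).mpr (by simp)), if_pos rfl, if_neg hne01.symm]
        omega
      · by_cases h1 : v = 1
        · subst h1
          rw [if_pos ((hfib0 1).mpr (by rw [hval1])), if_neg h0, if_pos rfl]
          omega
        · have hv2 : ¬ (v : ℕ) ≤ 1 := by rw [hcase01]; tauto
          rw [if_neg (fun h => hv2 ((hfib0 v).mp h)), if_neg h0, if_neg h1]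
    rw [Finset.sum_congr rfl hstep, Finset.sum_add_distrib,
      Finset.sum_ite_eq' u.support (0 : Fin (n + 1)) u,
      Finset.sum_ite_eq' u.support (1 : Fin (n + 1)) u]
    have hz0 : (if (0 : Fin (n + 1)) ∈ u.support then u 0 else 0) = u 0 := by
      split_ifs with h
      · rfl
      · exact (Finsupp.notMem_support_iff.mp h).symm
    have hz1 : (if (1 : Fin (n + 1)) ∈ u.support then u 1 else 0) = u 1 := by
      split_ifs with h
      · rfl
      · exact (Finsupp.notMem_support_iff.mp h).symm
    rw [hz0, hz1]
  -- the map of I as a monomial ideal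
  have hmapI : Ideal.map (rename g) I =
      Ideal.span ((fun d => monomial d (1 : k)) '' (Finsupp.mapDomain g '' G)) := by
    rw [hGI, Ideal.map_span, ← Set.image_comp, ← Set.image_comp]
    congr 1
    apply Set.image_congr'
    intro d
    exact rename_monomial g d 1
  -- the separation lemma: from e ∈ I extract e' with small support at {0,1}
  have hsep : ∀ e : Fin (n + 1) →₀ ℕ, monomial e (1 : k) ∈ I →
      ∃ e' : Fin (n + 1) →₀ ℕ, monomial e' (1 : k) ∈ I ∧ e' 0 + e' 1 ≤ 1 ∧
        ∀ v : Fin (n + 1), 2 ≤ (v : ℕ) → e' v ≤ e v := by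
    intro e he
    have h1 : rename g (monomial e (1 : k)) ∈ Ideal.map (rename g) I :=
      Ideal.mem_map_of_mem _ he
    rw [rename_monomial, hG₁] at h1
    rw [mem_ideal_span_monomial_image] at h1
    have hsupp : Finsupp.mapDomain g e ∈ (monomial (Finsupp.mapDomain g e) (1 : k)).support := by
      rw [mem_support_iff, coeff_monomial, if_pos rfl]
      exact one_ne_zero
    obtain ⟨d₁, hd₁G₁, hd₁le⟩ := h1 _ hsupp
    have h2 : monomial d₁ (1 : k) ∈ Ideal.span ((fun d => monomial d (1 : k)) '' G₁) :=
      Ideal.subset_span ⟨d₁, hd₁G₁, rfl⟩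
    rw [← hG₁, hmapI, mem_ideal_span_monomial_image] at h2
    have hsupp₁ : d₁ ∈ (monomial d₁ (1 : k)).support := by
      rw [mem_support_iff, coeff_monomial, if_pos rfl]
      exact one_ne_zero
    obtain ⟨w, ⟨e', he'G, rfl⟩, hwle⟩ := h2 _ hsupp₁
    refine ⟨e', ?_, ?_, ?_⟩
    · rw [hGI]
      exact Ideal.subset_span ⟨e', he'G, rfl⟩
    · have h3 : Finsupp.mapDomain g e' (g 0) ≤ d₁ (g 0) := hwle (g 0)
      rw [hmd0] at h3
      have h4 : d₁ (g 0) ≤ 1 := hG₁sq d₁ hd₁G₁ (g 0)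
      omega
    · intro v hv
      have h3 : Finsupp.mapDomain g e' (g v) ≤ d₁ (g v) := hwle (g v)
      have h4 : d₁ (g v) ≤ Finsupp.mapDomain g e (g v) := hd₁le (g v)
      rw [hmd2 e' v hv] at h3
      rw [hmd2 e v hv] at h4
      omega
  -- main argument
  intro f hf
  rw [hJmem] at hf ⊢
  intro m hm
  -- the two chains
  obtain ⟨u1, hu1P, hu1i, hu1v, hu1j⟩ := aux_chain (1 : Fin (n + 1)) 0 hne01 f P hf m hm
  have hf' : ∀ u ∈ ((X (0 : Fin (n + 1)) - X 1) * f).support, P u := by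
    have hneg : (X (0 : Fin (n + 1)) - X 1) * f = -((X 1 - X 0) * f) := by ring
    rw [hneg, support_neg]
    exact hf
  obtain ⟨u0, hu0P, hu0i, hu0v, hu0j⟩ := aux_chain (0 : Fin (n + 1)) 1 hne01.symm f P hf' m hm
  -- goal : P m
  intro e he
  -- helper to extract a common support point with m, or conclude 1 ∈ supp of the test vector
  have key1 : ∀ e'' : Fin (n + 1) →₀ ℕ, monomial e'' (1 : k) ∈ I →
      (∀ v, v ∈ m.support → v ∈ e''.support → False) → e'' 1 ≠ 0 := by
    intro e'' he'' hno
    obtain ⟨v, hvu, hve⟩ := hu1P e'' he''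
    rw [Finsupp.mem_support_iff] at hvu hve
    by_cases hv1 : v = 1
    · subst hv1; exact hve
    · exfalso
      by_cases hv0 : v = 0
      · subst hv0
        exact hno 0 (Finsupp.mem_support_iff.mpr (hu1j hvu)) (Finsupp.mem_support_iff.mpr hve)
      · have := hu1v v hv1 hv0
        exact hno v (Finsupp.mem_support_iff.mpr (by omega)) (Finsupp.mem_support_iff.mpr hve)
  have key0 : ∀ e'' : Fin (n + 1) →₀ ℕ, monomial e'' (1 : k) ∈ I →
      (∀ v, v ∈ m.support → v ∈ e''.support → False) → e'' 0 ≠ 0 := by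
    intro e'' he'' hno
    obtain ⟨v, hvu, hve⟩ := hu0P e'' he''
    rw [Finsupp.mem_support_iff] at hvu hve
    by_cases hv0 : v = 0
    · subst hv0; exact hve
    · exfalso
      by_cases hv1 : v = 1
      · subst hv1
        exact hno 1 (Finsupp.mem_support_iff.mpr (hu0j hvu)) (Finsupp.mem_support_iff.mpr hve)
      · have := hu0v v hv0 hv1
        exact hno v (Finsupp.mem_support_iff.mpr (by omega)) (Finsupp.mem_support_iff.mpr hve)
  by_contra hcon
  push_neg at hcon
  have hno : ∀ v, v ∈ m.support → v ∈ e.support → False := fun v h1 h2 => hcon v h1 h2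
  have he1 : e 1 ≠ 0 := key1 e he hno
  have he0 : e 0 ≠ 0 := key0 e he hno
  obtain ⟨e', hI', hsmall, hle⟩ := hsep e he
  have hno' : ∀ v, v ∈ m.support → v ∈ e'.support → False := by
    intro v h1 h2
    rw [Finsupp.mem_support_iff] at h2
    by_cases hv0 : v = 0
    · subst hv0; exact hcon 0 h1 (Finsupp.mem_support_iff.mpr he0)
    · by_cases hv1 : v = 1
      · subst hv1; exact hcon 1 h1 (Finsupp.mem_support_iff.mpr he1)
      · have hv2 : 2 ≤ (v : ℕ) := by
          rcases (hcase01 v).not.mpr (by tauto) with h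
          omega
        have := hle v hv2
        exact hcon v h1 (Finsupp.mem_support_iff.mpr (by omega))
  have he'1 : e' 1 ≠ 0 := key1 e' hI' hno'
  have he'0 : e' 0 ≠ 0 := key0 e' hI' hno'
  omega
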